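/- (Braid Vandermonde identity.) For all integers a, m, n, k ≥ 0: Ш_{m+n−a,a}^{↑k} · β_{k,a} = Σ_{b,c ≥ 0, b+c=a} Ш_{m−b,b}^{↑k} · Ш_{n−c,c}^{↑(m+k)} · β_{k,b} · β_{m+k−b,c}^{↑b} in 𝕜B_∞. -/

import Mathlib

namespace BraidPaper

/-- Relations of the infinite Artin braid group `B_∞`.  The generator with index `n : ℕ`
represents the Artin generator `σ_{n+1}` (so generators are `σ_1, σ_2, …`). -/
def BraidRels : Set (FreeGroup ℕ) :=
  {r | (∃ i : ℕ, r = .of i * .of (i + 1) * .of i * (.of (i + 1) * .of i * .of (i + 1))⁻¹) ∨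
       (∃ i j : ℕ, i + 2 ≤ j ∧ r = .of i * .of j * (.of j * .of i)⁻¹)}

/-- The infinite Artin braid group `B_∞`, presented by generators `σ_1, σ_2, …` and the
braid and far-commutativity relations. -/
abbrev BInf : Type := PresentedGroup BraidRels

/-- The Artin generator `σ i` of `B_∞` (meaningful for `i ≥ 1`). -/
def σ (i : ℕ) : BInf := PresentedGroup.of (i - 1)

lemma rel_eq_one {r : FreeGroup ℕ} (hr : r ∈ BraidRels) : PresentedGroup.mk BraidRels r = 1 := by
  have : r ∈ Subgroup.normalClosure BraidRels := Subgroup.subset_normalClosure hr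
  exact (QuotientGroup.eq_one_iff r).mpr this

lemma gen_braid (i : ℕ) :
    (PresentedGroup.of i : BInf) * .of (i + 1) * .of i = .of (i + 1) * .of i * .of (i + 1) := by
  have h := rel_eq_one (Or.inl ⟨i, rfl⟩)
  rw [map_mul, map_mul, map_mul, map_inv, map_mul, map_mul, mul_inv_eq_one] at h
  exact h

lemma gen_comm {i j : ℕ} (hij : i + 2 ≤ j) :
    (PresentedGroup.of i : BInf) * .of j = .of j * .of i := by
  have h := rel_eq_one (Or.inr ⟨i, j, hij, rfl⟩)
  rw [map_mul, map_mul, map_inv, map_mul, mul_inv_eq_one] at h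
  exact h

/-- The shift endomorphism `↑ℓ : B_∞ → B_∞`, `σ_i ↦ σ_{i+ℓ}`. -/
def shift (l : ℕ) : BInf →* BInf :=
  PresentedGroup.toGroup (f := fun n => (PresentedGroup.of (n + l) : BInf)) (by
    rintro r (⟨i, rfl⟩ | ⟨i, j, hij, rfl⟩) <;>
      simp only [map_mul, map_inv, FreeGroup.lift_apply_of, mul_inv_eq_one]
    · have h1 : i + 1 + l = i + l + 1 := by omega
      rw [h1]; exact gen_braid (i + l)
    · exact gen_comm (by omega : (i + l) + 2 ≤ j + l))

/-- The ascending product `σ_i σ_{i+1} ⋯ σ_{i+l-1}` (of `l` factors). -/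
def asc (i l : ℕ) : BInf := ((List.range l).map fun t => σ (i + t)).prod

/-- The descending product `σ_i σ_{i-1} ⋯ σ_{i-k+1}` (of `k` factors). -/
def desc (i k : ℕ) : BInf := ((List.range k).map fun t => σ (i - t)).prod

/-- The block transposition braid
`β_{k,l} = (σ_k σ_{k+1} ⋯ σ_{k+l-1})(σ_{k-1} σ_k ⋯ σ_{k+l-2}) ⋯ (σ_1 σ_2 ⋯ σ_l)`,
with `β_{k,0} = β_{0,l} = 1`. -/
def β (k l : ℕ) : BInf := ((List.range k).map fun r => asc (k - r) l).prod

/-- The positive (Garside) lift `ω_a = β_{1,1} β_{2,1} ⋯ β_{a-1,1}` of the longest element of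
the symmetric group `S_a`, with `ω_0 = ω_1 = 1`. -/
def ω (a : ℕ) : BInf := ((List.range (a - 1)).map fun t => β (t + 1) 1).prod

/-- The copy of the braid group `B_n` inside `B_∞`: the subgroup generated by
`σ_1, …, σ_{n-1}`. -/
def BSub (n : ℕ) : Subgroup BInf := Subgroup.closure {g | ∃ i, 1 ≤ i ∧ i < n ∧ g = σ i}


variable (𝕜 : Type) [CommRing 𝕜]

/-- The canonical embedding of `B_∞` into its group algebra `𝕜B_∞`. -/
noncomputable def ι (g : BInf) : MonoidAlgebra 𝕜 BInf := MonoidAlgebra.of 𝕜 BInf g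

/-- The shift `↑ℓ` extended (as an algebra homomorphism) to the group algebra `𝕜B_∞`. -/
noncomputable def shiftA (l : ℕ) : MonoidAlgebra 𝕜 BInf →ₐ[𝕜] MonoidAlgebra 𝕜 BInf :=
  MonoidAlgebra.mapDomainAlgHom 𝕜 𝕜 (shift l)

/-- The braid shuffle elements `Ш_{m,n} ∈ 𝕜B_∞` (for natural `m, n`), determined by
`Ш_{0,n} = Ш_{m,0} = 1` and the Pascal-type recursion
`Ш_{m,n} = Ш_{m-1,n} + Ш_{m,n-1} β_{m,1}^{↑(n-1)}`. -/
noncomputable def Sh : ℕ → ℕ → MonoidAlgebra 𝕜 BInf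
  | 0, _ => 1
  | _ + 1, 0 => 1
  | m + 1, n + 1 => Sh m (n + 1) + Sh (m + 1) n * ι 𝕜 (shift n (β (m + 1) 1))
  termination_by m n => (m, n)

/-- The braid shuffle elements `Ш_{m,n} ∈ 𝕜B_∞` for integer indices: `Ш_{m,n} = 0` whenever
`m < 0` or `n < 0`. -/
noncomputable def ShZ (m n : ℤ) : MonoidAlgebra 𝕜 BInf :=
  if 0 ≤ m ∧ 0 ≤ n then Sh 𝕜 m.toNat n.toNat else 0

/-- The braid Pochhammer symbol
`P_{k,n}(x,y) = (x - β_{k,1} y)(x - β_{k+1,1} y) ⋯ (x - β_{k+n-1,1} y) ∈ 𝕜B_∞`. -/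
noncomputable def Poch (k n : ℕ) (x y : 𝕜) : MonoidAlgebra 𝕜 BInf :=
  ((List.range n).map fun t =>
    algebraMap 𝕜 (MonoidAlgebra 𝕜 BInf) x - algebraMap 𝕜 (MonoidAlgebra 𝕜 BInf) y * ι 𝕜 (β (k + t) 1)).prod

/-! ### Group-level lemmas -/

lemma sigma_comm {i j : ℕ} (h1 : 1 ≤ i) (h2 : i + 2 ≤ j) : Commute (σ i) (σ j) := by
  have := gen_comm (show (i - 1) + 2 ≤ j - 1 by omega)
  exact this

lemma shift_of (s n : ℕ) : shift s (PresentedGroup.of n) = PresentedGroup.of (n + s) :=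
  PresentedGroup.toGroup.of _

lemma shift_sigma (s : ℕ) {i : ℕ} (hi : 1 ≤ i) : shift s (σ i) = σ (i + s) := by
  unfold σ
  rw [shift_of]
  congr 1
  omega

lemma shift_shift (s t : ℕ) (g : BInf) : shift s (shift t g) = shift (t + s) g := by
  have h : (shift s).comp (shift t) = shift (t + s) := by
    apply PresentedGroup.ext
    intro x
    simp only [MonoidHom.comp_apply, shift_of]
    congr 1
    omega
  exact DFunLike.congr_fun h g

lemma asc_zero (i : ℕ) : asc i 0 = 1 := by simp [asc]

lemma asc_succ (i l : ℕ) : asc i (l + 1) = asc i l * σ (i + l) := by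
  simp [asc, List.range_succ]

lemma asc_one (i : ℕ) : asc i 1 = σ i := by rw [show (1:ℕ) = 0 + 1 from rfl, asc_succ, asc_zero, one_mul, Nat.add_zero]

lemma desc_zero (i : ℕ) : desc i 0 = 1 := by simp [desc]

lemma desc_succ (i l : ℕ) : desc i (l + 1) = desc i l * σ (i - l) := by
  simp [desc, List.range_succ]

lemma desc_append (i p q : ℕ) : desc i (p + q) = desc i p * desc (i - p) q := by
  induction q with
  | zero => simp [desc_zero]
  | succ q ih =>
      rw [show p + (q + 1) = (p + q) + 1 by ring, desc_succ, ih, desc_succ, mul_assoc]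
      congr 3
      omega

lemma desc_one (i : ℕ) : desc i 1 = σ i := by rw [show (1:ℕ) = 0 + 1 from rfl, desc_succ, desc_zero, one_mul, Nat.sub_zero]

lemma desc_succ_left (i l : ℕ) : desc i (l + 1) = σ i * desc (i - 1) l := by
  rw [show l + 1 = 1 + l by ring, desc_append, desc_one]

lemma commute_asc_sigma {i l j : ℕ} (hi : 1 ≤ i) (h : i + l + 1 ≤ j) :
    Commute (asc i l) (σ j) := by
  apply Commute.list_prod_left
  intro x hx
  simp only [List.mem_map, List.mem_range] at hx
  obtain ⟨t, ht, rfl⟩ := hx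
  exact sigma_comm (by omega) (by omega)

lemma commute_beta_sigma {k l j : ℕ} (h : k + l + 1 ≤ j) : Commute (β k l) (σ j) := by
  apply Commute.list_prod_left
  intro x hx
  simp only [List.mem_map, List.mem_range] at hx
  obtain ⟨r, hr, rfl⟩ := hx
  exact commute_asc_sigma (by omega) (by omega)

lemma commute_beta_desc {k l i q : ℕ} (h : k + l + q ≤ i) : Commute (β k l) (desc i q) := by
  apply Commute.list_prod_right
  intro x hx
  simp only [List.mem_map, List.mem_range] at hx
  obtain ⟨t, ht, rfl⟩ := hx
  exact commute_beta_sigma (by omega)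

lemma shift_asc (s : ℕ) {i : ℕ} (l : ℕ) (hi : 1 ≤ i) : shift s (asc i l) = asc (i + s) l := by
  unfold asc
  rw [map_list_prod, List.map_map]
  congr 1
  apply List.map_congr_left
  intro t ht
  simp only [Function.comp_apply]
  rw [shift_sigma s (by omega)]
  congr 1
  omega

lemma shift_desc (s : ℕ) {i l : ℕ} (hl : l ≤ i) : shift s (desc i l) = desc (i + s) l := by
  unfold desc
  rw [map_list_prod, List.map_map]
  congr 1
  apply List.map_congr_left
  intro t ht
  simp only [List.mem_range] at ht
  simp only [Function.comp_apply]
  rw [shift_sigma s (by omega)]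
  congr 1
  omega

lemma commute_shift_beta_desc {s p c i q : ℕ} (h : s + p + c + q ≤ i) :
    Commute (shift s (β p c)) (desc i q) := by
  apply Commute.list_prod_right
  intro x hx
  simp only [List.mem_map, List.mem_range] at hx
  obtain ⟨t, ht, rfl⟩ := hx
  unfold β
  rw [map_list_prod, List.map_map]
  apply Commute.list_prod_left
  intro y hy
  simp only [List.mem_map, List.mem_range, Function.comp_apply] at hy
  obtain ⟨r, hr, rfl⟩ := hy
  rw [shift_asc s c (by omega)]
  exact commute_asc_sigma (by omega) (by omega)

lemma beta_zero_right (k : ℕ) : β k 0 = 1 := by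
  unfold β
  apply List.prod_eq_one
  intro x hx
  simp only [List.mem_map, List.mem_range] at hx
  obtain ⟨r, hr, rfl⟩ := hx
  exact asc_zero _

lemma beta_zero_left (l : ℕ) : β 0 l = 1 := by simp [β]

lemma beta_succ_left (k l : ℕ) : β (k + 1) l = asc (k + 1) l * β k l := by
  unfold β
  rw [List.range_succ_eq_map]
  simp only [List.map_cons, List.prod_cons, List.map_map, Nat.sub_zero]
  congr 1
  congr 1
  apply List.map_congr_left
  intro r hr
  simp only [Function.comp_apply]
  congr 1
  omega

lemma beta_one (M : ℕ) : β M 1 = desc M M := by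
  unfold β desc
  have : (fun r => asc (M - r) 1) = (fun t : ℕ => σ (M - t)) := by
    funext r
    exact asc_one _
  rw [this]

lemma beta_succ_right (k l : ℕ) : β k (l + 1) = β k l * desc (k + l) k := by
  induction k with
  | zero => simp [beta_zero_left, desc_zero]
  | succ k ih =>
      rw [beta_succ_left, asc_succ, ih, beta_succ_left]
      have hc : Commute (β k l) (σ (k + 1 + l)) := commute_beta_sigma (by omega)
      have hd : desc (k + 1 + l) (k + 1) = σ (k + 1 + l) * desc (k + l) k := by
        rw [desc_succ_left]
        congr 2
        omega
      rw [hd]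
      simp only [← mul_assoc]
      rw [mul_assoc (asc (k+1) l), ← hc.eq, ← mul_assoc]

/-- Key identity for the `Term2` reorganization. -/
lemma star2 (Mt a' k : ℕ) :
    shift (a' + k) (β Mt 1) * β k (a' + 1) =
      β k a' * desc (Mt + a' + k) (Mt + k) := by
  have h1 : shift (a' + k) (β Mt 1) = desc (Mt + a' + k) Mt := by
    rw [beta_one, shift_desc _ le_rfl]
    congr 1
    omega
  have h2 : β k (a' + 1) = β k a' * desc (k + a') k := beta_succ_right k a'
  have h3 : desc (Mt + a' + k) (Mt + k) = desc (Mt + a' + k) Mt * desc (k + a') k := by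
    rw [desc_append]
    congr 2
    omega
  have hc : Commute (β k a') (desc (Mt + a' + k) Mt) := commute_beta_desc (by omega)
  rw [h1, h2, h3, ← mul_assoc, ← hc.eq, mul_assoc]

/-- Key identity for the per-term `Cross` reorganization. -/
lemma star (m n k b c' : ℕ) (hb : b ≤ m) (hc : c' ≤ n) :
    shift (m + k + c') (β (n - c') 1) * β k b * shift b (β (m + k - b) (c' + 1)) =
      β k b * shift b (β (m + k - b) c') * desc (m + n + k) (n - c' + (m + k - b)) := by
  have hD : shift (m + k + c') (β (n - c') 1) = desc (m + n + k) (n - c') := by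
    rw [beta_one, shift_desc _ le_rfl]
    congr 1
    omega
  have hsplit : desc (m + n + k) (n - c' + (m + k - b)) =
      desc (m + n + k) (n - c') * desc (m + k + c') (m + k - b) := by
    rw [desc_append]
    congr 2
    omega
  have hβ : shift b (β (m + k - b) (c' + 1)) =
      shift b (β (m + k - b) c') * desc (m + k + c') (m + k - b) := by
    rw [beta_succ_right, map_mul, shift_desc _ (by omega)]
    congr 2
    omega
  have c1 : Commute (β k b) (desc (m + n + k) (n - c')) := commute_beta_desc (by omega)
  have c2 : Commute (shift b (β (m + k - b) c')) (desc (m + n + k) (n - c')) :=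
    commute_shift_beta_desc (by omega)
  have cW : Commute (β k b * shift b (β (m + k - b) c')) (desc (m + n + k) (n - c')) :=
    c1.mul_left c2
  rw [hD, hsplit, hβ]
  calc desc (m + n + k) (n - c') * β k b *
        (shift b (β (m + k - b) c') * desc (m + k + c') (m + k - b))
      = desc (m + n + k) (n - c') * (β k b * shift b (β (m + k - b) c')) *
          desc (m + k + c') (m + k - b) := by
        simp only [mul_assoc]
    _ = β k b * shift b (β (m + k - b) c') *
          (desc (m + n + k) (n - c') * desc (m + k + c') (m + k - b)) := by
        rw [← cW.eq]
        simp only [mul_assoc]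

/-! ### Algebra-level lemmas -/

variable {𝕜}

lemma iota_mul (g h : BInf) : ι 𝕜 (g * h) = ι 𝕜 g * ι 𝕜 h :=
  map_mul (MonoidAlgebra.of 𝕜 BInf) g h

lemma iota_one : ι 𝕜 (1 : BInf) = 1 := map_one (MonoidAlgebra.of 𝕜 BInf)

lemma shiftA_iota (l : ℕ) (g : BInf) : shiftA 𝕜 l (ι 𝕜 g) = ι 𝕜 (shift l g) := by
  simp [shiftA, ι, MonoidAlgebra.mapDomainAlgHom, MonoidAlgebra.of_apply,
    MonoidAlgebra.mapDomainRingHom_apply, Finsupp.mapDomain_single]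

lemma Sh_zero_left (n : ℕ) : Sh 𝕜 0 n = 1 := by
  rw [Sh]

lemma Sh_zero_right (m : ℕ) : Sh 𝕜 m 0 = 1 := by
  cases m with
  | zero => rw [Sh]
  | succ m => rw [Sh]

lemma ShZ_of_nat (m n : ℕ) : ShZ 𝕜 (m : ℤ) (n : ℤ) = Sh 𝕜 m n := by
  simp [ShZ]

lemma ShZ_neg_left {m : ℤ} (n : ℤ) (h : m < 0) : ShZ 𝕜 m n = 0 := by
  rw [ShZ, if_neg (by omega)]

lemma ShZ_zero_right {m : ℤ} (h : 0 ≤ m) : ShZ 𝕜 m 0 = 1 := by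
  rw [ShZ, if_pos ⟨h, le_refl 0⟩, Int.toNat_zero, Sh_zero_right]

lemma ShZ_pascal (M : ℤ) (N : ℕ) (hN : 1 ≤ N) :
    ShZ 𝕜 M (N : ℤ) = ShZ 𝕜 (M - 1) (N : ℤ) +
      ShZ 𝕜 M ((N : ℤ) - 1) * ι 𝕜 (shift (N - 1) (β M.toNat 1)) := by
  obtain ⟨q, rfl⟩ : ∃ q : ℕ, N = q + 1 := ⟨N - 1, by omega⟩
  rcases lt_or_ge M 0 with hM | hM
  · rw [ShZ_neg_left _ hM, ShZ_neg_left _ (by omega), ShZ_neg_left _ hM, zero_mul, add_zero]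
  lift M to ℕ using hM with p
  rw [show ((q + 1 : ℕ) : ℤ) - 1 = ((q : ℕ) : ℤ) by push_cast; ring,
      show (q + 1) - 1 = q from rfl]
  cases p with
  | zero =>
      have e2 : ShZ 𝕜 (((0 : ℕ) : ℤ) - 1) ((q + 1 : ℕ) : ℤ) = 0 := ShZ_neg_left _ (by omega)
      rw [e2, zero_add, ShZ_of_nat, ShZ_of_nat, Sh_zero_left, Sh_zero_left]
      simp [beta_zero_left, iota_one]
  | succ p =>
      rw [show (((p + 1 : ℕ) : ℤ) - 1) = ((p : ℕ) : ℤ) by push_cast; ring,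
          ShZ_of_nat, ShZ_of_nat, ShZ_of_nat,
          show ((p + 1 : ℕ) : ℤ).toNat = p + 1 by simp]
      rw [Sh]

lemma ShZ_neg_right (m : ℤ) {n : ℤ} (h : n < 0) : ShZ 𝕜 m n = 0 := by
  rw [ShZ, if_neg (by omega)]

lemma cross_term (m n k b c' : ℕ) (hb : b ≤ m) (hc : c' ≤ n) :
    shiftA 𝕜 k (ShZ 𝕜 ((m:ℤ) - b) b) *
      (shiftA 𝕜 (m + k) (ShZ 𝕜 ((n:ℤ) - c') c') *
        ι 𝕜 (shift (m + k) (shift c' (β (n - c') 1)))) *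
      ι 𝕜 (β k b) * ι 𝕜 (shift b (β (m + k - b) (c' + 1))) =
    shiftA 𝕜 k (ShZ 𝕜 ((m:ℤ) - b) b) *
      shiftA 𝕜 (m + k) (ShZ 𝕜 ((n:ℤ) - c') c') *
      ι 𝕜 (β k b) * ι 𝕜 (shift b (β (m + k - b) c')) *
      ι 𝕜 (desc (m + n + k) (n - c' + (m + k - b))) := by
  rw [shift_shift, show c' + (m + k) = m + k + c' by ring]
  have h := congrArg (ι 𝕜) (star m n k b c' hb hc)
  rw [iota_mul, iota_mul, iota_mul, iota_mul] at h
  simp only [mul_assoc] at h ⊢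
  rw [h]

variable (𝕜)

/-- braid Vandermonde identity: for all `a, m, n, k ≥ 0`,
`Ш_{m+n-a,a}^{↑k} β_{k,a} = Σ_{b+c=a} Ш_{m-b,b}^{↑k} Ш_{n-c,c}^{↑(m+k)} β_{k,b} β_{m+k-b,c}^{↑b}`
(summands with `b > m` or `c > n` vanish). -/
theorem braid_vandermonde (a m n k : ℕ) :
    shiftA 𝕜 k (ShZ 𝕜 ((m : ℤ) + n - a) a) * ι 𝕜 (β k a) =
      ∑ b ∈ Finset.range (a + 1),
        shiftA 𝕜 k (ShZ 𝕜 ((m : ℤ) - b) b) *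
          shiftA 𝕜 (m + k) (ShZ 𝕜 ((n : ℤ) - ((a - b : ℕ) : ℤ)) ((a - b : ℕ) : ℤ)) *
          ι 𝕜 (β k b) * ι 𝕜 (shift b (β (m + k - b) (a - b))) := by
  induction n generalizing a with
  | zero =>
      rw [Finset.sum_eq_single_of_mem a (Finset.self_mem_range_succ a) ?side]
      case side =>
        intro b hb hne
        have hba : b < a := by
          simp only [Finset.mem_range] at hb
          omega
        rw [ShZ_neg_left ((a - b : ℕ) : ℤ) (by omega)]
        simp
      · simp only [Nat.sub_self, Nat.cast_zero, sub_self, add_zero]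
        rw [ShZ_zero_right (le_refl (0:ℤ)), map_one, mul_one, beta_zero_right, map_one,
          iota_one, mul_one]
  | succ n ih =>
      cases a with
      | zero =>
          simp only [Nat.sub_self, Nat.cast_zero, sub_zero, Finset.range_one,
            Finset.sum_singleton, beta_zero_right, iota_one, mul_one, Nat.zero_sub]
          simp only [zero_add, Finset.sum_range_one, Nat.cast_zero, sub_zero]
          rw [ShZ_zero_right (by omega), ShZ_zero_right (by omega), ShZ_zero_right (by omega)]
          simp [map_one, iota_one, beta_zero_right]
      | succ a' =>
          rw [ShZ_pascal ((m:ℤ) + ((n+1:ℕ):ℤ) - ((a'+1:ℕ):ℤ)) (a'+1) (by omega)]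
          rw [show ((m:ℤ) + ((n+1:ℕ):ℤ) - ((a'+1:ℕ):ℤ)) - 1 = (m:ℤ) + (n:ℤ) - ((a'+1:ℕ):ℤ) by push_cast; ring]
          rw [show ((a'+1:ℕ):ℤ) - 1 = (a':ℤ) by push_cast; ring]
          rw [show (a'+1) - 1 = a' from rfl]
          rw [show (m:ℤ) + ((n+1:ℕ):ℤ) - ((a'+1:ℕ):ℤ) = (m:ℤ) + (n:ℤ) - (a':ℤ) by push_cast; ring]
          rw [map_add, map_mul, shiftA_iota, add_mul]
          rw [ih (a'+1), shift_shift]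
          rw [mul_assoc (shiftA 𝕜 k (ShZ 𝕜 ((m:ℤ) + (n:ℤ) - (a':ℤ)) (a':ℤ))), ← iota_mul,
            star2, iota_mul, ← mul_assoc, ih a', Finset.sum_mul]
          conv_rhs => rw [Finset.sum_range_succ]
          conv_lhs => rw [Finset.sum_range_succ]
          rw [add_right_comm, ← Finset.sum_add_distrib]
          congr 1
          · refine Finset.sum_congr rfl fun b hb => ?_
            have hba : b ≤ a' := by
              simp only [Finset.mem_range] at hb
              omega
            rw [ShZ_pascal (((n+1:ℕ):ℤ) - ((a'+1-b:ℕ):ℤ)) (a'+1-b) (by omega)]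
            rw [show (((n+1:ℕ):ℤ) - ((a'+1-b:ℕ):ℤ)) - 1 = (n:ℤ) - ((a'+1-b:ℕ):ℤ) by omega]
            rw [show ((a'+1-b:ℕ):ℤ) - 1 = ((a'-b:ℕ):ℤ) by omega]
            rw [show (a'+1-b) - 1 = a'-b by omega]
            rw [show ((n+1:ℕ):ℤ) - ((a'+1-b:ℕ):ℤ) = (n:ℤ) - ((a'-b:ℕ):ℤ) by omega]
            rw [map_add, map_mul, shiftA_iota, mul_add, add_mul, add_mul]
            congr 1
            by_cases hbm : b ≤ m
            · by_cases hcn : a' - b ≤ n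
              · rw [show ((n:ℤ) - ((a'-b:ℕ):ℤ)).toNat = n - (a'-b) by omega]
                rw [show ((m:ℤ) + (n:ℤ) - (a':ℤ)).toNat = m + n - a' by omega]
                rw [show m + n - a' + a' + k = m + n + k by omega]
                rw [show m + n - a' + k = n - (a'-b) + (m + k - b) by omega]
                rw [show a' + 1 - b = (a' - b) + 1 by omega]
                exact (cross_term m n k b (a'-b) hbm hcn).symm
              · have hz : ShZ 𝕜 ((n:ℤ) - ((a'-b:ℕ):ℤ)) ((a'-b:ℕ):ℤ) = 0 :=
                  ShZ_neg_left _ (by omega)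
                rw [hz]
                simp
            · have hz : ShZ 𝕜 ((m:ℤ) - (b:ℤ)) (b:ℤ) = 0 := ShZ_neg_left _ (by omega)
              rw [hz]
              simp
          · simp only [Nat.sub_self, Nat.cast_zero, sub_zero]
            rw [ShZ_zero_right (by omega), ShZ_zero_right (by omega)]

end BraidPaper
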